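/- Fix an integer p ≥ 2, β > 0, J > 0 and h ∈ ℝ. For N ≥ 1 let Z_N := Σ_{σ ∈ {-1,1}^N} exp((βJ·(p−1)!/N^{p−1})·Σ_{1≤i₁<⋯<i_p≤N} σ_{i₁}⋯σ_{i_p} + βh·Σ_{i=1}^N σ_i) be the partition function of the fully connected p-spin Ising model. Then lim_{N→∞} (1/N)·log Z_N = max_{m ∈ [−1,1]} [ βJ·m^p/p + βh·m − g(m) ]. -/

import Mathlib

open Real Filter Finset Topology

/-- The spin value ±1 associated to a Boolean. -/
noncomputable def spin (b : Bool) : ℝ := if b then 1 else -1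

/-- Minus the binary entropy as a function of the magnetization `m`:
`g(m) = ((1-m)/2) log((1-m)/2) + ((1+m)/2) log((1+m)/2)`
(with the convention `0·log 0 = 0`, automatic since `Real.log 0 = 0`). -/
noncomputable def gEntropy (m : ℝ) : ℝ :=
  ((1 - m) / 2) * Real.log ((1 - m) / 2) + ((1 + m) / 2) * Real.log ((1 + m) / 2)

namespace PSpinAux

variable {N : ℕ}

noncomputable def esum (s : Fin N → ℝ) (k : ℕ) : ℝ :=
  ∑ A ∈ (univ : Finset (Fin N)).powersetCard k, ∏ i ∈ A, s i

noncomputable def mval (N k : ℕ) : ℝ := (2 * (k : ℝ) - N) / N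

lemma esum_zero (s : Fin N → ℝ) : esum s 0 = 1 := by
  simp [esum]

lemma esum_one (s : Fin N → ℝ) : esum s 1 = ∑ i, s i := by
  simp [esum, powersetCard_one]

lemma abs_esum_le (s : Fin N → ℝ) (h : ∀ i, |s i| = 1) (k : ℕ) :
    |esum s k| ≤ (N : ℝ) ^ k := by
  calc |esum s k| ≤ ∑ A ∈ (univ : Finset (Fin N)).powersetCard k, |∏ i ∈ A, s i| :=
        Finset.abs_sum_le_sum_abs _ _
    _ = ∑ A ∈ (univ : Finset (Fin N)).powersetCard k, 1 := by
        refine Finset.sum_congr rfl fun A _ => ?_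
        rw [Finset.abs_prod]
        simp [h]
    _ ≤ (N : ℝ) ^ k := by
        rw [Finset.sum_const, nsmul_eq_mul, mul_one, Finset.card_powersetCard, card_univ,
          Fintype.card_fin]
        exact_mod_cast Nat.choose_le_pow N k

lemma esum_rec (s : Fin N → ℝ) (h : ∀ i, s i * s i = 1) (q : ℕ) :
    (∑ i, s i) * esum s (q + 1)
      = (q + 2 : ℝ) * esum s (q + 2) + ((N - q : ℕ) : ℝ) * esum s q := by
  have key : ∀ A ∈ (univ : Finset (Fin N)).powersetCard (q+1),
      (∑ i, s i) * ∏ j ∈ A, s j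
        = (∑ i ∈ A, ∏ j ∈ A.erase i, s j) + ∑ i ∈ univ \ A, ∏ j ∈ insert i A, s j := by
    intro A hA
    have hsplit : (∑ i, s i) = ∑ i ∈ A, s i + ∑ i ∈ univ \ A, s i := by
      rw [add_comm, Finset.sum_sdiff (Finset.subset_univ A)]
    rw [hsplit, add_mul, Finset.sum_mul, Finset.sum_mul]
    congr 1
    · refine Finset.sum_congr rfl fun i hi => ?_
      rw [← Finset.mul_prod_erase A s hi, ← mul_assoc, h i, one_mul]
    · refine Finset.sum_congr rfl fun i hi => ?_
      rw [Finset.prod_insert (by simpa using (Finset.mem_sdiff.1 hi).2)]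
  have lhs_eq : (∑ i, s i) * esum s (q + 1)
      = (∑ A ∈ (univ : Finset (Fin N)).powersetCard (q+1), ∑ i ∈ A, ∏ j ∈ A.erase i, s j)
        + ∑ A ∈ (univ : Finset (Fin N)).powersetCard (q+1),
            ∑ i ∈ univ \ A, ∏ j ∈ insert i A, s j := by
    rw [esum, Finset.mul_sum, ← Finset.sum_add_distrib]
    exact Finset.sum_congr rfl key
  have T1 : (∑ A ∈ (univ : Finset (Fin N)).powersetCard (q+1), ∑ i ∈ A, ∏ j ∈ A.erase i, s j)
      = ((N - q : ℕ) : ℝ) * esum s q := by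
    rw [Finset.sum_sigma' ((univ : Finset (Fin N)).powersetCard (q+1)) (fun A => A)
      (fun A i => ∏ j ∈ A.erase i, s j)]
    rw [show ((N - q : ℕ) : ℝ) * esum s q
        = ∑ B ∈ (univ : Finset (Fin N)).powersetCard q, ∑ i ∈ univ \ B, ∏ j ∈ B, s j by
      rw [esum, Finset.mul_sum]
      refine Finset.sum_congr rfl fun B hB => ?_
      rw [Finset.sum_const, nsmul_eq_mul, Finset.card_sdiff_of_subset (Finset.subset_univ B),
        card_univ, Fintype.card_fin, (Finset.mem_powersetCard_univ).1 hB]]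
    rw [Finset.sum_sigma' ((univ : Finset (Fin N)).powersetCard q) (fun B => univ \ B)
      (fun B _ => ∏ j ∈ B, s j)]
    refine Finset.sum_nbij' (fun x => ⟨x.1.erase x.2, x.2⟩) (fun y => ⟨insert y.2 y.1, y.2⟩)
      ?_ ?_ ?_ ?_ ?_
    · rintro ⟨A, i⟩ hx
      simp only [Finset.mem_sigma, mem_powersetCard_univ] at hx ⊢
      refine ⟨?_, by simp⟩
      rw [Finset.card_erase_of_mem hx.2, hx.1]; omega
    · rintro ⟨B, i⟩ hy
      simp only [Finset.mem_sigma, mem_powersetCard_univ, Finset.mem_sdiff] at hy ⊢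
      refine ⟨?_, Finset.mem_insert_self _ _⟩
      rw [Finset.card_insert_of_notMem hy.2.2, hy.1]
    · rintro ⟨A, i⟩ hx
      simp only [Finset.mem_sigma, mem_powersetCard_univ] at hx
      simp [Finset.insert_erase hx.2]
    · rintro ⟨B, i⟩ hy
      simp only [Finset.mem_sigma, mem_powersetCard_univ, Finset.mem_sdiff] at hy
      simp [Finset.erase_insert hy.2.2]
    · rintro ⟨A, i⟩ _
      rfl
  have T2 : (∑ A ∈ (univ : Finset (Fin N)).powersetCard (q+1),
        ∑ i ∈ univ \ A, ∏ j ∈ insert i A, s j)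
      = (q + 2 : ℝ) * esum s (q + 2) := by
    rw [Finset.sum_sigma' ((univ : Finset (Fin N)).powersetCard (q+1)) (fun A => univ \ A)
      (fun A i => ∏ j ∈ insert i A, s j)]
    rw [show (q + 2 : ℝ) * esum s (q+2)
        = ∑ C ∈ (univ : Finset (Fin N)).powersetCard (q+2), ∑ _i ∈ C, ∏ j ∈ C, s j by
      rw [esum, Finset.mul_sum]
      refine Finset.sum_congr rfl fun C hC => ?_
      rw [Finset.sum_const, nsmul_eq_mul, (Finset.mem_powersetCard_univ).1 hC]
      push_cast
      ring]
    rw [Finset.sum_sigma' ((univ : Finset (Fin N)).powersetCard (q+2)) (fun C => C)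
      (fun C _ => ∏ j ∈ C, s j)]
    refine Finset.sum_nbij' (fun x => ⟨insert x.2 x.1, x.2⟩) (fun y => ⟨y.1.erase y.2, y.2⟩)
      ?_ ?_ ?_ ?_ ?_
    · rintro ⟨A, i⟩ hx
      simp only [Finset.mem_sigma, mem_powersetCard_univ, Finset.mem_sdiff] at hx ⊢
      refine ⟨?_, Finset.mem_insert_self _ _⟩
      rw [Finset.card_insert_of_notMem hx.2.2, hx.1]
    · rintro ⟨C, i⟩ hy
      simp only [Finset.mem_sigma, mem_powersetCard_univ] at hy ⊢
      refine ⟨?_, by simp⟩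
      rw [Finset.card_erase_of_mem hy.2, hy.1]; omega
    · rintro ⟨A, i⟩ hx
      simp only [Finset.mem_sigma, mem_powersetCard_univ, Finset.mem_sdiff] at hx
      simp [Finset.erase_insert hx.2.2]
    · rintro ⟨C, i⟩ hy
      simp only [Finset.mem_sigma, mem_powersetCard_univ] at hy
      simp [Finset.insert_erase hy.2]
    · rintro ⟨A, i⟩ _
      rfl
  rw [lhs_eq, T1, T2]
  ring

lemma abs_S_le (s : Fin N → ℝ) (habs : ∀ i, |s i| = 1) : |∑ i, s i| ≤ (N : ℝ) := by
  calc |∑ i, s i| ≤ ∑ i, |s i| := Finset.abs_sum_le_sum_abs _ _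
    _ = N := by simp [habs]

lemma esum_key (s : Fin N → ℝ) (h : ∀ i, s i * s i = 1) (habs : ∀ i, |s i| = 1)
    (hN : 1 ≤ N) (k : ℕ) :
    |(k.factorial : ℝ) * esum s k - (∑ i, s i) ^ k|
      ≤ 3 * (k.factorial : ℝ) * (N : ℝ) ^ (k - 1) := by
  induction k using Nat.twoStepInduction with
  | zero => simp [esum_zero]
  | one => simp [esum_one]
  | more q ih1 ih2 =>
    have hNpos : (0:ℝ) < N := by exact_mod_cast hN
    have hrec := esum_rec s h q
    set S := ∑ i, s i with hS
    have hfact : ((q+2).factorial : ℝ) = (q+2) * ((q+1).factorial : ℝ) := by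
      rw [show q + 2 = (q+1) + 1 by ring, Nat.factorial_succ]
      push_cast; ring
    have key : ((q+2).factorial : ℝ) * esum s (q+2) - S ^ (q+2)
        = S * (((q+1).factorial : ℝ) * esum s (q+1) - S ^ (q+1))
          - ((q+1).factorial : ℝ) * (((N - q : ℕ) : ℝ) * esum s q) := by
      have h2 : (q + 2 : ℝ) * esum s (q + 2) = S * esum s (q+1) - ((N - q : ℕ) : ℝ) * esum s q := by
        linarith [hrec]
      calc ((q+2).factorial : ℝ) * esum s (q+2) - S ^ (q+2)
          = ((q+1).factorial : ℝ) * ((q + 2 : ℝ) * esum s (q+2)) - S ^ (q+2) := by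
            rw [hfact]; ring
        _ = _ := by rw [h2]; ring
    rw [key]
    have hb1 : |S * (((q+1).factorial : ℝ) * esum s (q+1) - S ^ (q+1))|
        ≤ (N:ℝ) * (3 * ((q+1).factorial : ℝ) * (N : ℝ) ^ q) := by
      rw [abs_mul]
      have := ih2
      simp only [Nat.add_sub_cancel] at this
      exact mul_le_mul (abs_S_le s habs) this (abs_nonneg _) (Nat.cast_nonneg N)
    have hb2 : |((q+1).factorial : ℝ) * (((N - q : ℕ) : ℝ) * esum s q)|
        ≤ ((q+1).factorial : ℝ) * ((N:ℝ) * (N:ℝ)^q) := by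
      rw [abs_mul, abs_mul, abs_of_nonneg (by positivity : (0:ℝ) ≤ ((q+1).factorial : ℝ)),
        abs_of_nonneg (by positivity : (0:ℝ) ≤ ((N - q : ℕ) : ℝ))]
      refine mul_le_mul_of_nonneg_left ?_ (by positivity)
      exact mul_le_mul (by exact_mod_cast Nat.sub_le N q) (abs_esum_le s habs q)
        (abs_nonneg _) (Nat.cast_nonneg N)
    calc |S * (((q+1).factorial : ℝ) * esum s (q+1) - S ^ (q+1))
          - ((q+1).factorial : ℝ) * (((N - q : ℕ) : ℝ) * esum s q)|
        ≤ (N:ℝ) * (3 * ((q+1).factorial : ℝ) * (N : ℝ) ^ q)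
          + ((q+1).factorial : ℝ) * ((N:ℝ) * (N:ℝ)^q) :=
          (abs_sub _ _).trans (add_le_add hb1 hb2)
      _ ≤ 3 * ((q+2).factorial : ℝ) * (N : ℝ) ^ (q + 2 - 1) := by
          rw [hfact]
          have h1 : (N:ℝ) ^ (q + 2 - 1) = (N:ℝ) * (N:ℝ)^q := by
            rw [show q + 2 - 1 = q + 1 from rfl, pow_succ]; ring
          rw [h1]
          have hf : (0:ℝ) ≤ ((q+1).factorial : ℝ) := by positivity
          have hX : (0:ℝ) ≤ ((q+1).factorial : ℝ) * ((N:ℝ)*(N:ℝ)^q) := by positivity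
          nlinarith [mul_nonneg (show (0:ℝ) ≤ 3*(q:ℝ)+2 by positivity) hX]

/-- The `j`-th term of the binomial expansion of `N^N = (k + (N-k))^N`. -/
def uterm (N k j : ℕ) : ℕ := N.choose j * k ^ j * (N - k) ^ (N - j)

lemma uterm_sum (N k : ℕ) (hk : k ≤ N) :
    ∑ j ∈ Finset.range (N + 1), uterm N k j = N ^ N := by
  have := add_pow k (N - k) N
  rw [Nat.add_sub_cancel' hk] at this
  rw [this]
  refine Finset.sum_congr rfl fun j _ => ?_
  unfold uterm
  push_cast
  ring

lemma uterm_step (N k j : ℕ) (hj : j < N) :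
    (j + 1) * (N - k) * uterm N k (j + 1) = (N - j) * k * uterm N k j := by
  unfold uterm
  have h1 : N.choose (j+1) * (j+1) = N.choose j * (N - j) := Nat.choose_succ_right_eq N j
  have h2 : (N - k) * (N - k) ^ (N - (j+1)) = (N - k) ^ (N - j) := by
    rw [← pow_succ']
    congr 1
    omega
  calc (j + 1) * (N - k) * (N.choose (j+1) * k ^ (j+1) * (N - k) ^ (N - (j+1)))
      = (N.choose (j+1) * (j+1)) * (k ^ (j+1)) * ((N - k) * (N - k) ^ (N - (j+1))) := by ring
    _ = (N.choose j * (N - j)) * (k * k ^ j) * ((N - k) ^ (N - j)) := by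
        rw [h1, h2, pow_succ']
    _ = (N - j) * k * (N.choose j * k ^ j * (N - k) ^ (N - j)) := by ring

lemma uterm_le_up (N k j : ℕ) (hj : j < k) (hk : k ≤ N) :
    uterm N k j ≤ uterm N k (j + 1) := by
  have hstep := uterm_step N k j (lt_of_lt_of_le hj hk)
  have hco : (j + 1) * (N - k) ≤ (N - j) * k := by
    calc (j + 1) * (N - k) ≤ k * (N - j) :=
          Nat.mul_le_mul (show j + 1 ≤ k by omega) (show N - k ≤ N - j by omega)
      _ = (N - j) * k := Nat.mul_comm _ _
  have hpos : 0 < (N - j) * k := by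
    have : 0 < k := by omega
    have : 0 < N - j := by omega
    positivity
  have : (N - j) * k * uterm N k j ≤ (N - j) * k * uterm N k (j + 1) := by
    rw [← hstep]
    exact Nat.mul_le_mul_right _ hco
  exact Nat.le_of_mul_le_mul_left this hpos

lemma uterm_le_down (N k j : ℕ) (hj : k ≤ j) (hjN : j < N) :
    uterm N k (j + 1) ≤ uterm N k j := by
  have hstep := uterm_step N k j hjN
  have hco : (N - j) * k ≤ (j + 1) * (N - k) := by
    calc (N - j) * k ≤ (N - k) * (j + 1) :=
          Nat.mul_le_mul (show N - j ≤ N - k by omega) (show k ≤ j + 1 by omega)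
      _ = (j + 1) * (N - k) := Nat.mul_comm _ _
  have hpos : 0 < (j + 1) * (N - k) := by
    have : 0 < N - k := by omega
    positivity
  have : (j + 1) * (N - k) * uterm N k (j + 1) ≤ (j + 1) * (N - k) * uterm N k j := by
    rw [hstep]
    exact Nat.mul_le_mul_right _ hco
  exact Nat.le_of_mul_le_mul_left this hpos

lemma uterm_le_max (N k j : ℕ) (hk : k ≤ N) (hj : j ≤ N) :
    uterm N k j ≤ uterm N k k := by
  have up : ∀ d, d ≤ k → uterm N k (k - d) ≤ uterm N k k := by
    intro d
    induction d with
    | zero => simp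
    | succ d ih =>
      intro hd
      have h1 : uterm N k (k - (d+1)) ≤ uterm N k (k - (d+1) + 1) :=
        uterm_le_up N k (k - (d+1)) (by omega) hk
      have h2 : k - (d+1) + 1 = k - d := by omega
      rw [h2] at h1
      exact h1.trans (ih (by omega))
  have down : ∀ d, k + d ≤ N → uterm N k (k + d) ≤ uterm N k k := by
    intro d
    induction d with
    | zero => simp
    | succ d ih =>
      intro hd
      have h1 : uterm N k (k + d + 1) ≤ uterm N k (k + d) :=
        uterm_le_down N k (k + d) (by omega) (by omega)
      have h2 : k + (d + 1) = k + d + 1 := by omega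
      rw [h2]
      exact h1.trans (ih (by omega))
  rcases le_or_gt j k with hjk | hjk
  · have := up (k - j) (by omega)
    rwa [show k - (k - j) = j by omega] at this
  · have := down (j - k) (by omega)
    rwa [show k + (j - k) = j by omega] at this

lemma uterm_choose_le (N k : ℕ) (hk : k ≤ N) :
    uterm N k k ≤ N ^ N := by
  rw [← uterm_sum N k hk]
  exact Finset.single_le_sum (fun j _ => Nat.zero_le _) (Finset.mem_range.2 (by omega))

lemma pow_le_uterm_choose (N k : ℕ) (hk : k ≤ N) :
    N ^ N ≤ (N + 1) * uterm N k k := by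
  rw [← uterm_sum N k hk]
  calc ∑ j ∈ Finset.range (N + 1), uterm N k j
      ≤ ∑ _j ∈ Finset.range (N + 1), uterm N k k :=
        Finset.sum_le_sum fun j hj => uterm_le_max N k j hk (by simp at hj; omega)
    _ = (N + 1) * uterm N k k := by simp [Finset.sum_const, mul_comm]

lemma exp_helper (N j : ℕ) (hN : 1 ≤ N) :
    Real.exp (-(j : ℝ) * Real.log ((j : ℝ) / N)) * (j : ℝ) ^ j = (N : ℝ) ^ j := by
  have hNpos : (0:ℝ) < N := by exact_mod_cast hN
  rcases Nat.eq_zero_or_pos j with hj | hj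
  · subst hj; simp
  · have hjpos : (0:ℝ) < j := by exact_mod_cast hj
    have hq : (0:ℝ) < (j:ℝ)/N := by positivity
    have : Real.exp (-(j : ℝ) * Real.log ((j : ℝ) / N))
        = ((N:ℝ)/(j:ℝ)) ^ j := by
      rw [show -(j : ℝ) * Real.log ((j : ℝ) / N) = (j:ℝ) * Real.log ((N : ℝ) / j) by
        rw [Real.log_div (ne_of_gt hjpos) (ne_of_gt hNpos),
          Real.log_div (ne_of_gt hNpos) (ne_of_gt hjpos)]
        ring]
      rw [show ((j:ℝ) * Real.log ((N : ℝ) / j)) = ((j:ℕ):ℝ) * Real.log ((N : ℝ) / j) by norm_num,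
        Real.exp_nat_mul, Real.exp_log (by positivity)]
    rw [this, div_pow, div_mul_cancel₀]
    positivity

lemma exp_neg_g (N k : ℕ) (hN : 1 ≤ N) (hk : k ≤ N) :
    Real.exp (-(N:ℝ) * gEntropy (mval N k)) * ((k : ℝ) ^ k * ((N - k : ℕ) : ℝ) ^ (N - k))
      = (N : ℝ) ^ N := by
  have hNpos : (0:ℝ) < N := by exact_mod_cast hN
  have hcast : ((N - k : ℕ) : ℝ) = (N : ℝ) - k := by
    rw [Nat.cast_sub hk]
  have h1 : (1 - mval N k) / 2 = ((N - k : ℕ) : ℝ) / N := by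
    rw [hcast]; unfold mval; field_simp; ring
  have h2 : (1 + mval N k) / 2 = (k : ℝ) / N := by
    unfold mval; field_simp; ring
  have hg : -(N:ℝ) * gEntropy (mval N k)
      = -((N - k : ℕ) : ℝ) * Real.log (((N - k : ℕ) : ℝ) / N)
        + -(k : ℝ) * Real.log ((k : ℝ) / N) := by
    unfold gEntropy
    rw [h1, h2, hcast]
    field_simp
    ring
  rw [hg, Real.exp_add]
  calc Real.exp (-((N - k : ℕ) : ℝ) * Real.log (((N - k : ℕ) : ℝ) / N))
        * Real.exp (-(k : ℝ) * Real.log ((k : ℝ) / N))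
        * ((k : ℝ) ^ k * ((N - k : ℕ) : ℝ) ^ (N - k))
      = (Real.exp (-((N - k : ℕ) : ℝ) * Real.log (((N - k : ℕ) : ℝ) / N))
          * ((N - k : ℕ) : ℝ) ^ (N - k))
        * (Real.exp (-(k : ℝ) * Real.log ((k : ℝ) / N)) * (k : ℝ) ^ k) := by ring
    _ = (N : ℝ) ^ (N - k) * (N : ℝ) ^ k := by
        rw [exp_helper N (N - k) hN, exp_helper N k hN]
    _ = (N : ℝ) ^ N := by
        rw [← pow_add]
        congr 1
        omega

lemma kk_pos (k : ℕ) : 0 < k ^ k := by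
  rcases Nat.eq_zero_or_pos k with h | h
  · subst h; simp
  · exact Nat.pow_pos h

lemma uterm_choose_le' (N k : ℕ) (hk : k ≤ N) :
    N.choose k * k ^ k * (N - k) ^ (N - k) ≤ N ^ N := uterm_choose_le N k hk

lemma pow_le_uterm_choose' (N k : ℕ) (hk : k ≤ N) :
    N ^ N ≤ (N + 1) * (N.choose k * k ^ k * (N - k) ^ (N - k)) := pow_le_uterm_choose N k hk

lemma choose_le_exp (N k : ℕ) (hN : 1 ≤ N) (hk : k ≤ N) :
    (N.choose k : ℝ) ≤ Real.exp (-(N:ℝ) * gEntropy (mval N k)) := by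
  have hpos : (0:ℝ) < (k : ℝ) ^ k * ((N - k : ℕ) : ℝ) ^ (N - k) := by
    have h1 : (0:ℝ) < (k : ℝ) ^ k := by exact_mod_cast kk_pos k
    have h2 : (0:ℝ) < ((N - k : ℕ) : ℝ) ^ (N - k) := by exact_mod_cast kk_pos (N - k)
    positivity
  rw [← mul_le_mul_iff_left₀ hpos, exp_neg_g N k hN hk]
  calc (N.choose k : ℝ) * ((k : ℝ) ^ k * ((N - k : ℕ) : ℝ) ^ (N - k))
      = ((N.choose k * k ^ k * (N - k) ^ (N - k) : ℕ) : ℝ) := by push_cast; ring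
    _ ≤ ((N ^ N : ℕ) : ℝ) := by exact_mod_cast uterm_choose_le' N k hk
    _ = (N : ℝ) ^ N := by push_cast; rfl

lemma exp_le_choose (N k : ℕ) (hN : 1 ≤ N) (hk : k ≤ N) :
    Real.exp (-(N:ℝ) * gEntropy (mval N k)) ≤ ((N : ℝ) + 1) * (N.choose k : ℝ) := by
  have hpos : (0:ℝ) < (k : ℝ) ^ k * ((N - k : ℕ) : ℝ) ^ (N - k) := by
    have h1 : (0:ℝ) < (k : ℝ) ^ k := by exact_mod_cast kk_pos k
    have h2 : (0:ℝ) < ((N - k : ℕ) : ℝ) ^ (N - k) := by exact_mod_cast kk_pos (N - k)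
    positivity
  rw [← mul_le_mul_iff_left₀ hpos, exp_neg_g N k hN hk]
  calc (N : ℝ) ^ N = ((N ^ N : ℕ) : ℝ) := by push_cast; rfl
    _ ≤ (((N + 1) * (N.choose k * k ^ k * (N - k) ^ (N - k)) : ℕ) : ℝ) := by
        exact_mod_cast pow_le_uterm_choose' N k hk
    _ = ((N : ℝ) + 1) * (N.choose k : ℝ) * ((k : ℝ) ^ k * ((N - k : ℕ) : ℝ) ^ (N - k)) := by
        push_cast; ring

lemma spin_mul_self (b : Bool) : spin b * spin b = 1 := by
  cases b <;> simp [spin]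

lemma abs_spin (b : Bool) : |spin b| = 1 := by
  cases b <;> simp [spin]

lemma sum_spin_eq (σ : Fin N → Bool) :
    ∑ i, spin (σ i)
      = 2 * (((univ : Finset (Fin N)).filter fun i => σ i = true).card : ℝ) - N := by
  classical
  set k := ((univ : Finset (Fin N)).filter fun i => σ i = true).card with hk
  have hsplit := Finset.sum_filter_add_sum_filter_not (univ : Finset (Fin N))
    (fun i => σ i = true) (fun i => spin (σ i))
  have h1 : ∑ i ∈ (univ : Finset (Fin N)).filter (fun i => σ i = true), spin (σ i)
      = (k : ℝ) := by
    rw [show ∑ i ∈ (univ : Finset (Fin N)).filter (fun i => σ i = true), spin (σ i)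
        = ∑ i ∈ (univ : Finset (Fin N)).filter (fun i => σ i = true), 1 from
      Finset.sum_congr rfl fun i hi => by
        simp only [Finset.mem_filter] at hi
        simp [spin, hi.2]]
    simp [hk]
  have h2 : ∑ i ∈ (univ : Finset (Fin N)).filter (fun i => ¬(σ i = true)), spin (σ i)
      = -(((N : ℝ) - k)) := by
    rw [show ∑ i ∈ (univ : Finset (Fin N)).filter (fun i => ¬(σ i = true)), spin (σ i)
        = ∑ i ∈ (univ : Finset (Fin N)).filter (fun i => ¬(σ i = true)), (-1 : ℝ) from
      Finset.sum_congr rfl fun i hi => by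
        simp only [Finset.mem_filter] at hi
        simp [spin, hi.2]]
    have hcard : (((univ : Finset (Fin N)).filter fun i => ¬(σ i = true)).card : ℝ)
        = (N : ℝ) - k := by
      have := Finset.card_filter_add_card_filter_not (s := (univ : Finset (Fin N)))
        (p := fun i => σ i = true)
      have hle : k ≤ N := by
        rw [hk]
        exact (Finset.card_filter_le _ _).trans (by simp)
      have : ((univ : Finset (Fin N)).filter fun i => ¬(σ i = true)).card = N - k := by
        simp only [card_univ, Fintype.card_fin] at this
        omega
      rw [this, Nat.cast_sub hle]
    rw [Finset.sum_const, nsmul_eq_mul, hcard]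
    ring
  rw [← hsplit, h1, h2]
  ring

lemma card_filter_le_N (σ : Fin N → Bool) :
    ((univ : Finset (Fin N)).filter fun i => σ i = true).card ≤ N := by
  exact (Finset.card_filter_le _ _).trans (by simp)

/-- reindexing a sum over Boolean configurations through the up-spin count -/
lemma sum_over_bool (N : ℕ) (G : ℕ → ℝ) :
    ∑ σ : Fin N → Bool, G (((univ : Finset (Fin N)).filter fun i => σ i = true).card)
      = ∑ k ∈ Finset.range (N + 1), (N.choose k : ℝ) * G k := by
  classical
  have hbij : Function.Bijective
      (fun σ : Fin N → Bool => (univ : Finset (Fin N)).filter fun i => σ i = true) := by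
    refine Function.bijective_iff_has_inverse.mpr ⟨fun T => fun i => decide (i ∈ T), ?_, ?_⟩
    · intro σ
      funext i
      simp
    · intro T
      ext i
      simp
  have step1 : ∑ σ : Fin N → Bool,
        G (((univ : Finset (Fin N)).filter fun i => σ i = true).card)
      = ∑ T : Finset (Fin N), G T.card :=
    Fintype.sum_bijective _ hbij _ _ (fun σ => rfl)
  rw [step1]
  have step2 : ∑ T : Finset (Fin N), G T.card
      = ∑ T ∈ (univ : Finset (Fin N)).powerset, G T.card := by
    rw [Finset.powerset_univ]
  rw [step2, Finset.sum_powerset_apply_card]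
  simp only [card_univ, Fintype.card_fin, nsmul_eq_mul]


lemma exponent_est (p : ℕ) (hp : 2 ≤ p) (β J h : ℝ) (hβ : 0 < β) (hJ : 0 < J)
    (hN : 1 ≤ N) (σ : Fin N → Bool) :
    |(β * J * ((p - 1).factorial : ℝ) / (N : ℝ) ^ (p - 1)) * esum (fun i => spin (σ i)) p
        + β * h * (∑ i, spin (σ i))
        - (N : ℝ) * (β * J
            * (mval N (((univ : Finset (Fin N)).filter fun i => σ i = true).card)) ^ p / p
          + β * h * mval N (((univ : Finset (Fin N)).filter fun i => σ i = true).card))|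
      ≤ 3 * (β * J) * ((p - 1).factorial : ℝ) := by
  classical
  have hNpos : (0:ℝ) < N := by exact_mod_cast hN
  have hppos : (0:ℝ) < p := by exact_mod_cast (by omega : 0 < p)
  set k := ((univ : Finset (Fin N)).filter fun i => σ i = true).card with hk
  set S := ∑ i, spin (σ i) with hS
  have hmS : mval N k = S / N := by
    rw [hS, sum_spin_eq σ, mval]
  have hNp : (N:ℝ) ^ p = (N:ℝ) ^ (p - 1) * N := by
    rw [← pow_succ]
    congr 1
    omega
  have hfact : (p:ℝ) * ((p - 1).factorial : ℝ) = (p.factorial : ℝ) := by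
    exact_mod_cast Nat.mul_factorial_pred (by omega : p ≠ 0)
  have hNppos : (0:ℝ) < (N:ℝ) ^ (p - 1) := by positivity
  set E := esum (fun i => spin (σ i)) p with hE
  have hiden : (β * J * ((p - 1).factorial : ℝ) / (N : ℝ) ^ (p - 1)) * E
        + β * h * S
        - (N : ℝ) * (β * J * (mval N k) ^ p / p + β * h * mval N k)
      = (β * J / ((p:ℝ) * (N:ℝ) ^ (p - 1))) * ((p.factorial : ℝ) * E - S ^ p) := by
    rw [hmS, div_pow]
    rw [← hfact]
    field_simp
    rw [hNp]
    ring
  rw [hiden, abs_mul]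
  have habs1 : |β * J / ((p:ℝ) * (N:ℝ) ^ (p - 1))| = β * J / ((p:ℝ) * (N:ℝ) ^ (p - 1)) :=
    abs_of_pos (by positivity)
  rw [habs1]
  have hkey := esum_key (fun i => spin (σ i)) (fun i => spin_mul_self (σ i))
    (fun i => abs_spin (σ i)) hN p
  rw [← hE, ← hS] at hkey
  calc β * J / ((p:ℝ) * (N:ℝ) ^ (p - 1)) * |(p.factorial : ℝ) * E - S ^ p|
      ≤ β * J / ((p:ℝ) * (N:ℝ) ^ (p - 1)) * (3 * (p.factorial : ℝ) * (N : ℝ) ^ (p - 1)) :=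
        mul_le_mul_of_nonneg_left hkey (by positivity)
    _ = 3 * (β * J) * ((p - 1).factorial : ℝ) := by
        rw [← hfact]
        field_simp

section

variable (p : ℕ) (β J h : ℝ)

/-- The free-energy functional. -/
noncomputable def phi (p : ℕ) (β J h : ℝ) (m : ℝ) : ℝ :=
  β * J * m ^ p / p + β * h * m - gEntropy m

/-- The energy part. -/
noncomputable def eneF (p : ℕ) (β J h : ℝ) (m : ℝ) : ℝ :=
  β * J * m ^ p / p + β * h * m

/-- The partition function. -/
noncomputable def Z (p : ℕ) (β J h : ℝ) (N : ℕ) : ℝ :=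
  ∑ σ : Fin N → Bool, Real.exp
    ((β * J * ((p - 1).factorial : ℝ) / (N : ℝ) ^ (p - 1)) * esum (fun i => spin (σ i)) p
      + β * h * ∑ i, spin (σ i))

lemma Z_pos (hp : 2 ≤ p) (N : ℕ) : 0 < Z p β J h N := by
  apply Finset.sum_pos (fun σ _ => Real.exp_pos _)
  exact Finset.univ_nonempty

lemma Z_le (hp : 2 ≤ p) (hβ : 0 < β) (hJ : 0 < J) (hN : 1 ≤ N) (T : ℝ)
    (hT : ∀ k ≤ N, phi p β J h (mval N k) ≤ T) :
    Real.log (Z p β J h N) ≤ (N : ℝ) * T + 3 * (β * J) * ((p - 1).factorial : ℝ)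
      + Real.log ((N : ℝ) + 1) := by
  set C := 3 * (β * J) * ((p - 1).factorial : ℝ) with hC
  have step1 : Z p β J h N ≤ ∑ σ : Fin N → Bool,
      Real.exp ((N : ℝ) * eneF p β J h
        (mval N (((univ : Finset (Fin N)).filter fun i => σ i = true).card)) + C) := by
    apply Finset.sum_le_sum
    intro σ _
    apply Real.exp_le_exp.mpr
    have := exponent_est p hp β J h hβ hJ hN σ
    have h2 := (abs_le.1 this).2
    unfold eneF
    linarith
  have step2 : ∑ σ : Fin N → Bool,
      Real.exp ((N : ℝ) * eneF p β J h
        (mval N (((univ : Finset (Fin N)).filter fun i => σ i = true).card)) + C)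
      = ∑ k ∈ Finset.range (N + 1), (N.choose k : ℝ)
          * Real.exp ((N : ℝ) * eneF p β J h (mval N k) + C) :=
    sum_over_bool N (fun k => Real.exp ((N : ℝ) * eneF p β J h (mval N k) + C))
  have step3 : ∑ k ∈ Finset.range (N + 1), (N.choose k : ℝ)
        * Real.exp ((N : ℝ) * eneF p β J h (mval N k) + C)
      ≤ ∑ k ∈ Finset.range (N + 1), Real.exp ((N : ℝ) * T + C) := by
    apply Finset.sum_le_sum
    intro k hk
    have hkN : k ≤ N := by simp only [Finset.mem_range] at hk; omega
    calc (N.choose k : ℝ) * Real.exp ((N : ℝ) * eneF p β J h (mval N k) + C)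
        ≤ Real.exp (-(N:ℝ) * gEntropy (mval N k))
            * Real.exp ((N : ℝ) * eneF p β J h (mval N k) + C) :=
          mul_le_mul_of_nonneg_right (choose_le_exp N k hN hkN) (Real.exp_nonneg _)
      _ = Real.exp ((N : ℝ) * phi p β J h (mval N k) + C) := by
          rw [← Real.exp_add]
          congr 1
          unfold phi eneF
          ring
      _ ≤ Real.exp ((N : ℝ) * T + C) := by
          apply Real.exp_le_exp.mpr
          have := hT k hkN
          have hNn : (0:ℝ) ≤ N := Nat.cast_nonneg N
          nlinarith
  have step4 : ∑ _k ∈ Finset.range (N + 1), Real.exp ((N : ℝ) * T + C)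
      = ((N : ℝ) + 1) * Real.exp ((N : ℝ) * T + C) := by
    rw [Finset.sum_const, Finset.card_range, nsmul_eq_mul]
    push_cast
    ring
  have hZle : Z p β J h N ≤ ((N : ℝ) + 1) * Real.exp ((N : ℝ) * T + C) := by
    calc Z p β J h N ≤ _ := step1
      _ = _ := step2
      _ ≤ _ := step3
      _ = _ := step4
  calc Real.log (Z p β J h N) ≤ Real.log (((N : ℝ) + 1) * Real.exp ((N : ℝ) * T + C)) :=
        Real.log_le_log (Z_pos p β J h hp N) hZle
    _ = Real.log ((N : ℝ) + 1) + ((N : ℝ) * T + C) := by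
        rw [Real.log_mul (by positivity) (by positivity), Real.log_exp]
    _ = (N : ℝ) * T + C + Real.log ((N : ℝ) + 1) := by ring

lemma Z_ge (hp : 2 ≤ p) (hβ : 0 < β) (hJ : 0 < J) (hN : 1 ≤ N) (k : ℕ) (hk : k ≤ N) :
    (N : ℝ) * phi p β J h (mval N k) - 3 * (β * J) * ((p - 1).factorial : ℝ)
      - Real.log ((N : ℝ) + 1) ≤ Real.log (Z p β J h N) := by
  set C := 3 * (β * J) * ((p - 1).factorial : ℝ) with hC
  have step1 : ∑ σ : Fin N → Bool,
      Real.exp ((N : ℝ) * eneF p β J h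
        (mval N (((univ : Finset (Fin N)).filter fun i => σ i = true).card)) - C)
      ≤ Z p β J h N := by
    apply Finset.sum_le_sum
    intro σ _
    apply Real.exp_le_exp.mpr
    have := exponent_est p hp β J h hβ hJ hN σ
    have h2 := (abs_le.1 this).1
    unfold eneF
    linarith
  have step2 : ∑ σ : Fin N → Bool,
      Real.exp ((N : ℝ) * eneF p β J h
        (mval N (((univ : Finset (Fin N)).filter fun i => σ i = true).card)) - C)
      = ∑ j ∈ Finset.range (N + 1), (N.choose j : ℝ)
          * Real.exp ((N : ℝ) * eneF p β J h (mval N j) - C) :=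
    sum_over_bool N (fun j => Real.exp ((N : ℝ) * eneF p β J h (mval N j) - C))
  have step3 : (N.choose k : ℝ) * Real.exp ((N : ℝ) * eneF p β J h (mval N k) - C)
      ≤ ∑ j ∈ Finset.range (N + 1), (N.choose j : ℝ)
          * Real.exp ((N : ℝ) * eneF p β J h (mval N j) - C) := by
    apply Finset.single_le_sum (f := fun j => (N.choose j : ℝ)
      * Real.exp ((N : ℝ) * eneF p β J h (mval N j) - C))
    · intro j _
      positivity
    · exact Finset.mem_range.2 (by omega)
  have step4 : Real.exp ((N : ℝ) * phi p β J h (mval N k) - C) / ((N : ℝ) + 1)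
      ≤ (N.choose k : ℝ) * Real.exp ((N : ℝ) * eneF p β J h (mval N k) - C) := by
    have h1 : Real.exp (-(N:ℝ) * gEntropy (mval N k)) / ((N : ℝ) + 1) ≤ (N.choose k : ℝ) := by
      rw [div_le_iff₀ (by positivity)]
      calc Real.exp (-(N:ℝ) * gEntropy (mval N k)) ≤ ((N : ℝ) + 1) * (N.choose k : ℝ) :=
            exp_le_choose N k hN hk
        _ = (N.choose k : ℝ) * ((N : ℝ) + 1) := by ring
    calc Real.exp ((N : ℝ) * phi p β J h (mval N k) - C) / ((N : ℝ) + 1)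
        = (Real.exp (-(N:ℝ) * gEntropy (mval N k)) / ((N : ℝ) + 1))
            * Real.exp ((N : ℝ) * eneF p β J h (mval N k) - C) := by
          rw [div_mul_eq_mul_div, ← Real.exp_add]
          congr 2
          unfold phi eneF
          ring
      _ ≤ (N.choose k : ℝ) * Real.exp ((N : ℝ) * eneF p β J h (mval N k) - C) :=
          mul_le_mul_of_nonneg_right h1 (Real.exp_nonneg _)
  have hge : Real.exp ((N : ℝ) * phi p β J h (mval N k) - C) / ((N : ℝ) + 1)
      ≤ Z p β J h N := by
    calc Real.exp ((N : ℝ) * phi p β J h (mval N k) - C) / ((N : ℝ) + 1)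
        ≤ _ := step4
      _ ≤ _ := step3
      _ = _ := step2.symm
      _ ≤ _ := step1
  calc (N : ℝ) * phi p β J h (mval N k) - C - Real.log ((N : ℝ) + 1)
      = Real.log (Real.exp ((N : ℝ) * phi p β J h (mval N k) - C) / ((N : ℝ) + 1)) := by
        rw [Real.log_div (by positivity) (by positivity), Real.log_exp]
    _ ≤ Real.log (Z p β J h N) := Real.log_le_log (by positivity) hge

end

lemma continuous_gEntropy : Continuous gEntropy := by
  have h1 : Continuous fun m : ℝ => (1 - m) / 2 := by fun_prop
  have h2 : Continuous fun m : ℝ => (1 + m) / 2 := by fun_prop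
  exact (Real.continuous_mul_log.comp h1).add (Real.continuous_mul_log.comp h2)

lemma continuous_phi (p : ℕ) (β J h : ℝ) : Continuous (phi p β J h) := by
  unfold phi
  exact Continuous.sub (by fun_prop) continuous_gEntropy

lemma mval_mem_Icc (N k : ℕ) (hN : 1 ≤ N) (hk : k ≤ N) :
    mval N k ∈ Set.Icc (-1 : ℝ) 1 := by
  have hNpos : (0:ℝ) < N := by exact_mod_cast hN
  have hkr : (k : ℝ) ≤ N := by exact_mod_cast hk
  have hk0 : (0:ℝ) ≤ k := Nat.cast_nonneg k
  constructor
  · rw [mval, le_div_iff₀ hNpos]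
    linarith
  · rw [mval, div_le_one hNpos]
    linarith

lemma tendsto_log_succ_div :
    Tendsto (fun N : ℕ => Real.log ((N : ℝ) + 1) / N) atTop (𝓝 0) := by
  have h1 : Tendsto (fun x : ℝ => Real.log x / x) atTop (𝓝 0) :=
    Real.isLittleO_log_id_atTop.tendsto_div_nhds_zero
  have h2 : Tendsto (fun N : ℕ => (N : ℝ) + 1) atTop atTop :=
    tendsto_atTop_add_const_right atTop 1 tendsto_natCast_atTop_atTop
  have h3 : Tendsto (fun N : ℕ => Real.log ((N : ℝ) + 1) / ((N : ℝ) + 1)) atTop (𝓝 0) :=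
    h1.comp h2
  have h4 : Tendsto (fun N : ℕ => ((N : ℝ) + 1) / N) atTop (𝓝 1) := by
    have hb : Tendsto (fun N : ℕ => 1 + 1 / (N : ℝ)) atTop (𝓝 (1 + 0)) :=
      tendsto_const_nhds.add tendsto_one_div_atTop_nhds_zero_nat
    rw [show (1:ℝ) = 1 + 0 by norm_num]
    refine hb.congr' ?_
    filter_upwards [eventually_ge_atTop 1] with N hN
    have hNpos : (0:ℝ) < N := by exact_mod_cast hN
    field_simp
    ring
  have h5 := h3.mul h4
  rw [zero_mul] at h5
  refine h5.congr' ?_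
  filter_upwards [eventually_ge_atTop 1] with N hN
  have hNpos : (0:ℝ) < N := by exact_mod_cast hN
  field_simp

end PSpinAux

open PSpinAux

theorem pspin_free_energy
    (p : ℕ) (hp : 2 ≤ p) (β J h : ℝ) (hβ : 0 < β) (hJ : 0 < J) :
    Tendsto
      (fun N : ℕ => (1 / (N : ℝ)) * Real.log
        (∑ σ : Fin N → Bool, Real.exp
          ((β * J * (Nat.factorial (p - 1) : ℝ) / (N : ℝ) ^ (p - 1)) *
              ∑ A ∈ Finset.univ.powersetCard p, ∏ i ∈ A, spin (σ i)
            + β * h * ∑ i, spin (σ i))))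
      atTop
      (nhds (⨆ m : Set.Icc (-1 : ℝ) 1,
        (β * J * (m : ℝ) ^ p / p + β * h * (m : ℝ) - gEntropy m))) := by
  have hφc : Continuous (phi p β J h) := continuous_phi p β J h
  -- maximum of φ on [-1, 1]
  obtain ⟨mstar, hmem, hmax'⟩ := isCompact_Icc.exists_isMaxOn
    (Set.nonempty_Icc.2 (by norm_num : (-1:ℝ) ≤ 1)) hφc.continuousOn
  have hmax : ∀ y ∈ Set.Icc (-1:ℝ) 1, phi p β J h y ≤ phi p β J h mstar :=
    fun y hy => hmax' hy
  set T := phi p β J h mstar with hT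
  haveI : Nonempty (Set.Icc (-1:ℝ) 1) := ⟨⟨0, by norm_num⟩⟩
  have hsup : (⨆ m : Set.Icc (-1 : ℝ) 1, phi p β J h m) = T := by
    apply le_antisymm
    · exact ciSup_le fun m => hmax m m.2
    · exact le_ciSup (f := fun m : Set.Icc (-1:ℝ) 1 => phi p β J h (m : ℝ))
        ⟨T, by rintro y ⟨m, rfl⟩; exact hmax m m.2⟩ ⟨mstar, hmem⟩
  -- the candidate magnetizations
  set q : ℝ := (1 + mstar) / 2 with hq
  have hq0 : 0 ≤ q := by
    have := hmem.1
    rw [hq]; linarith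
  have hq1 : q ≤ 1 := by
    have := hmem.2
    rw [hq]; linarith
  set k0 : ℕ → ℕ := fun N => ⌊(N : ℝ) * q⌋₊ with hk0
  have hk0le : ∀ N : ℕ, k0 N ≤ N := by
    intro N
    have h1 : (N : ℝ) * q ≤ (N : ℝ) := by
      nlinarith [Nat.cast_nonneg (α := ℝ) N]
    calc k0 N ≤ ⌊(N : ℝ)⌋₊ := Nat.floor_le_floor h1
      _ = N := Nat.floor_natCast N
  have hm_close : ∀ N : ℕ, 1 ≤ N → |mval N (k0 N) - mstar| ≤ 2 / N := by
    intro N hN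
    have hNpos : (0:ℝ) < N := by exact_mod_cast hN
    have hfl1 : (k0 N : ℝ) ≤ (N : ℝ) * q := Nat.floor_le (by positivity)
    have hfl2 : (N : ℝ) * q - 1 ≤ (k0 N : ℝ) := by
      have := Nat.lt_floor_add_one ((N : ℝ) * q)
      push_cast at this ⊢
      linarith
    have hms : mstar = 2 * q - 1 := by rw [hq]; ring
    have heq : mval N (k0 N) - mstar = 2 * ((k0 N : ℝ) - (N : ℝ) * q) / N := by
      rw [mval, hms]
      field_simp
      ring
    rw [heq, abs_div, abs_of_pos hNpos]
    apply div_le_div_of_nonneg_right ?_ hNpos.le |>.trans_eq rfl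
    rw [abs_mul, abs_of_pos (by norm_num : (0:ℝ) < 2)]
    have : |(k0 N : ℝ) - (N : ℝ) * q| ≤ 1 := by
      rw [abs_le]
      constructor <;> linarith
    linarith
  have htend_m : Tendsto (fun N : ℕ => mval N (k0 N)) atTop (𝓝 mstar) := by
    have hz : Tendsto (fun N : ℕ => mval N (k0 N) - mstar) atTop (𝓝 0) := by
      apply squeeze_zero_norm' ?_ (tendsto_const_div_atTop_nhds_zero_nat 2)
      filter_upwards [eventually_ge_atTop 1] with N hN
      simpa [Real.norm_eq_abs] using hm_close N hN
    have := hz.add_const mstar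
    simpa using this
  have htend_phi : Tendsto (fun N : ℕ => phi p β J h (mval N (k0 N))) atTop (𝓝 T) :=
    (hφc.tendsto mstar).comp htend_m
  -- the error sequence
  set C := 3 * (β * J) * ((p - 1).factorial : ℝ) with hC
  have hδ : Tendsto (fun N : ℕ => (C + Real.log ((N : ℝ) + 1)) / N) atTop (𝓝 0) := by
    have h1 := tendsto_const_div_atTop_nhds_zero_nat C
    have h2 := tendsto_log_succ_div
    have := h1.add h2
    rw [add_zero] at this
    refine this.congr fun N => ?_
    rw [← add_div]
  -- identify the function with Z and the target with T
  have hZeq : (fun N : ℕ => (1 / (N : ℝ)) * Real.log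
        (∑ σ : Fin N → Bool, Real.exp
          ((β * J * (Nat.factorial (p - 1) : ℝ) / (N : ℝ) ^ (p - 1)) *
              ∑ A ∈ Finset.univ.powersetCard p, ∏ i ∈ A, spin (σ i)
            + β * h * ∑ i, spin (σ i))))
      = fun N : ℕ => (1 / (N : ℝ)) * Real.log (Z p β J h N) := rfl
  have hTeq : (⨆ m : Set.Icc (-1 : ℝ) 1,
        (β * J * (m : ℝ) ^ p / p + β * h * (m : ℝ) - gEntropy m)) = T := by
    rw [← hsup]
    rfl
  rw [hZeq, hTeq]
  -- squeeze
  have hlower : Tendsto (fun N : ℕ => phi p β J h (mval N (k0 N))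
      - (C + Real.log ((N : ℝ) + 1)) / N) atTop (𝓝 T) := by
    have := htend_phi.sub hδ
    rwa [sub_zero] at this
  have hupper : Tendsto (fun N : ℕ => T + (C + Real.log ((N : ℝ) + 1)) / N) atTop (𝓝 T) := by
    have := (tendsto_const_nhds (x := T) (f := atTop (α := ℕ))).add hδ
    rwa [add_zero] at this
  refine tendsto_of_tendsto_of_tendsto_of_le_of_le' hlower hupper ?_ ?_
  · filter_upwards [eventually_ge_atTop 1] with N hN
    have hNpos : (0:ℝ) < N := by exact_mod_cast hN
    have hZge := Z_ge p β J h hp hβ hJ hN (k0 N) (hk0le N)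
    rw [← hC] at hZge
    have : ((N : ℝ) * phi p β J h (mval N (k0 N)) - C - Real.log ((N : ℝ) + 1)) / N
        ≤ Real.log (Z p β J h N) / N := by
      apply div_le_div_of_nonneg_right hZge hNpos.le |>.trans_eq rfl
    calc phi p β J h (mval N (k0 N)) - (C + Real.log ((N : ℝ) + 1)) / N
        = ((N : ℝ) * phi p β J h (mval N (k0 N)) - C - Real.log ((N : ℝ) + 1)) / N := by
          field_simp
          ring
      _ ≤ Real.log (Z p β J h N) / N := this
      _ = (1 / (N : ℝ)) * Real.log (Z p β J h N) := by ring
  · filter_upwards [eventually_ge_atTop 1] with N hN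
    have hNpos : (0:ℝ) < N := by exact_mod_cast hN
    have hZle := Z_le p β J h hp hβ hJ hN T
      (fun k hk => hmax (mval N k) (mval_mem_Icc N k hN hk))
    rw [← hC] at hZle
    calc (1 / (N : ℝ)) * Real.log (Z p β J h N)
        = Real.log (Z p β J h N) / N := by ring
      _ ≤ ((N : ℝ) * T + C + Real.log ((N : ℝ) + 1)) / N :=
          div_le_div_of_nonneg_right hZle hNpos.le |>.trans_eq rfl
      _ = T + (C + Real.log ((N : ℝ) + 1)) / N := by
          field_simp
          ring
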